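/- Fix t₁ < ⋯ < tₙ and T ∈ ℝⁿ. Define E_∞(k) = dist_∞(T, G_k) for k < 0, where G_k = span{(e^{k t₁},…,e^{k tₙ}), (1,…,1)} ⊆ ℝⁿ with the max norm. If there exist indices p < q < r such that T_p < T_q, T_q > T_r, and T attains its maximum at q while attaining its minimum at two indices on either side of q (a maximum between two minima), then E_∞ is constant, equal to (max_i T_i − min_i T_i)/2, and for every k < 0 the constant vector ((M+m)/2,…,(M+m)/2) is a best approximation to T in G_k, where M = max_i T_i and m = min_i T_i. -/
import Mathlib


theorem stmt_15 (n : ℕ) (t : Fin n → ℝ) (ht : StrictMono t) (T : Fin n → ℝ)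
    (i q j : Fin n) (hiq : i < q) (hqj : q < j)
    (hmax : ∀ l, T l ≤ T q) (hmin₁ : ∀ l, T i ≤ T l) (hmin₂ : ∀ l, T j ≤ T l)
    (hlt₁ : T i < T q) (hlt₂ : T j < T q)
    (G : ℝ → Submodule ℝ (Fin n → ℝ))
    (hG : ∀ k, G k = Submodule.span ℝ
      {(fun l => Real.exp (k * t l)), (fun _ => (1 : ℝ))}) :
    ∀ k < (0 : ℝ),
      sInf {d | ∃ v ∈ G k, d = ‖T - v‖} = (T q - T i) / 2 ∧
      (fun _ => (T q + T i) / 2 : Fin n → ℝ) ∈ G k ∧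
      ‖T - (fun _ => (T q + T i) / 2 : Fin n → ℝ)‖ = (T q - T i) / 2 ∧
      ∀ v ∈ G k, ‖T - (fun _ => (T q + T i) / 2 : Fin n → ℝ)‖ ≤ ‖T - v‖ := by
  intro k hk
  have hij : T j = T i := le_antisymm (hmin₂ i) (hmin₁ j)
  set c : Fin n → ℝ := (fun _ => (T q + T i) / 2)
  set d : ℝ := (T q - T i) / 2 with hd
  have hdpos : 0 < d := by simp [hd]; linarith
  -- membership of constant
  have hcmem : c ∈ G k := by
    rw [hG]
    have h1 : (fun _ => (1 : ℝ)) ∈ Submodule.span ℝ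
        {(fun l => Real.exp (k * t l)), (fun _ => (1 : ℝ))} :=
      Submodule.subset_span (by simp)
    have := Submodule.smul_mem _ ((T q + T i) / 2) h1
    convert this using 1
    funext l; simp [c]
  -- norm of T - c
  have hnormc : ‖T - c‖ = d := by
    apply le_antisymm
    · apply (pi_norm_le_iff_of_nonneg hdpos.le).2
      intro l
      have h1 := hmin₁ l
      have h2 := hmax l
      simp only [Pi.sub_apply, c, Real.norm_eq_abs, hd]
      rw [abs_le]; constructor <;> linarith
    · have := norm_le_pi_norm (T - c) q
      simp only [Pi.sub_apply, c, Real.norm_eq_abs] at this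
      rw [abs_of_nonneg (by linarith)] at this
      linarith [this]
  -- lower bound for any v
  have hlb : ∀ v ∈ G k, d ≤ ‖T - v‖ := by
    intro v hv
    rw [hG] at hv
    rw [Submodule.mem_span_pair] at hv
    obtain ⟨a, b, hab⟩ := hv
    have hvl : ∀ l, v l = a * Real.exp (k * t l) + b := by
      intro l; rw [← hab]; simp [mul_comm]
    have he : Real.exp (k * t j) < Real.exp (k * t q) ∧
        Real.exp (k * t q) < Real.exp (k * t i) := by
      constructor <;> apply Real.exp_lt_exp.2 <;> nlinarith [ht hiq, ht hqj]
    -- v q ≤ max (v i) (v j)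
    have hmid : v q ≤ max (v i) (v j) := by
      rcases le_or_gt 0 a with ha | ha
      · refine le_trans ?_ (le_max_left _ _)
        rw [hvl, hvl]
        nlinarith [he.2]
      · refine le_trans ?_ (le_max_right _ _)
        rw [hvl, hvl]
        nlinarith [he.1]
    set N := ‖T - v‖
    have hq' := norm_le_pi_norm (T - v) q
    have hi' := norm_le_pi_norm (T - v) i
    have hj' := norm_le_pi_norm (T - v) j
    simp only [Pi.sub_apply, Real.norm_eq_abs] at hq' hi' hj'
    rw [abs_le] at hq' hi' hj'
    rcases le_or_gt (v i) (v j) with h | h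
    · rw [max_eq_right h] at hmid; linarith [hq'.1, hj'.2]
    · rw [max_eq_left h.le] at hmid; linarith [hq'.1, hi'.2]
  refine ⟨?_, hcmem, hnormc, fun v hv => hnormc ▸ hlb v hv⟩
  apply le_antisymm
  · refine csInf_le ⟨d, ?_⟩ ⟨c, hcmem, hnormc.symm⟩
    rintro x ⟨v, hv, rfl⟩
    exact hlb v hv
  · refine le_csInf ⟨‖T - c‖, c, hcmem, rfl⟩ ?_
    rintro x ⟨v, hv, rfl⟩
    exact hlb v hv
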